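/- (Expected error bound under the small-σ condition.) Let ε ∈ (0,1], c ∈ (0,1], and suppose 0 < σ < (1/35)·√(ε·c/(τ·d³·max(L,1))). Then E_{g~N(0,I_d)}[σ⁴·τ²·‖g‖⁶ + 2·σ²·τ·L·‖g‖⁴] ≤ ε, where the expectation is over a standard Gaussian vector g on ℝ^d. -/

import Mathlib

open MeasureTheory ProbabilityTheory
open scoped RealInnerProductSpace

/-- The standard Gaussian measure `N(0, I_n)` on `ℝ^n`. -/
noncomputable def stdGaussian (n : ℕ) : Measure (EuclideanSpace ℝ (Fin n)) :=
  (Measure.pi (fun _ => gaussianReal 0 1)).map (MeasurableEquiv.toLp 2 (Fin n → ℝ))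

section aux
open Real Set
open scoped ENNReal NNReal

private lemma sg_integrable_pow_mul_exp (n : ℕ) :
    Integrable (fun x : ℝ => x ^ n * Real.exp (-(1/2) * x ^ 2)) := by
  have := integrable_rpow_mul_exp_neg_mul_sq (b := 1/2) (by norm_num) (s := (n : ℝ))
    (by exact_mod_cast neg_one_lt_zero.trans_le (Nat.cast_nonneg n))
  simpa [Real.rpow_natCast] using this

private lemma sg_integral_even_pow_exp (n : ℕ) :
    ∫ x : ℝ, x ^ (2 * n) * Real.exp (-(1/2) * x ^ 2)
      = 2 * ((1/2 : ℝ) ^ (-((2 * n : ℝ) + 1) / 2) * (1 / 2) * Real.Gamma ((2 * n + 1) / 2)) := by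
  have heven : (fun x : ℝ => x ^ (2 * n) * Real.exp (-(1/2) * x ^ 2))
      = fun x : ℝ => |x| ^ (2 * n) * Real.exp (-(1/2) * |x| ^ 2) := by
    funext x
    rw [pow_mul, pow_mul, sq_abs]
  rw [heven, integral_comp_abs (f := fun x : ℝ => x ^ (2 * n) * Real.exp (-(1/2) * x ^ 2))]
  congr 1
  rw [← integral_rpow_mul_exp_neg_mul_rpow (p := 2) (q := (2 * n : ℝ)) (b := 1/2)
    (by norm_num) (by exact_mod_cast neg_one_lt_zero.trans_le (by positivity)) (by norm_num)]
  refine setIntegral_congr_fun measurableSet_Ioi (fun x hx => ?_)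
  rw [show ((2:ℝ) * n) = ((2 * n : ℕ) : ℝ) by push_cast; ring, Real.rpow_natCast,
    show ((2:ℝ)) = ((2 : ℕ) : ℝ) by norm_num, Real.rpow_natCast]

private lemma sg_rpow_half_aux (k : ℕ) :
    ((1/2:ℝ)) ^ (-((2*(k:ℝ)+1))/2) = 2 ^ k * Real.sqrt 2 := by
  have h1 : ((1/2:ℝ)) ^ (-((2*(k:ℝ)+1))/2) = (2:ℝ) ^ (((2*(k:ℝ)+1))/2) := by
    rw [one_div, Real.inv_rpow (by norm_num), ← Real.rpow_neg (by norm_num)]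
    congr 1; ring
  rw [h1, show (2*(k:ℝ)+1)/2 = (k:ℝ) + 1/2 by ring, Real.rpow_add (by norm_num),
    Real.sqrt_eq_rpow, Real.rpow_natCast]

private lemma sg_I4 : ∫ x : ℝ, x ^ 4 * Real.exp (-(1/2) * x ^ 2) = 3 * Real.sqrt (2*π) := by
  have h := sg_integral_even_pow_exp 2
  rw [sg_rpow_half_aux 2] at h
  norm_num at h ⊢
  rw [h, show ((5:ℝ)/2) = 3/2 + 1 by norm_num, Real.Gamma_add_one (by norm_num),
    show (3/2:ℝ) = 1/2 + 1 by norm_num, Real.Gamma_add_one (by norm_num),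
    Real.Gamma_one_half_eq]
  ring

private lemma sg_I6 : ∫ x : ℝ, x ^ 6 * Real.exp (-(1/2) * x ^ 2) = 15 * Real.sqrt (2*π) := by
  have h := sg_integral_even_pow_exp 3
  rw [sg_rpow_half_aux 3] at h
  norm_num at h ⊢
  rw [h, show ((7:ℝ)/2) = 5/2 + 1 by norm_num, Real.Gamma_add_one (by norm_num),
    show ((5:ℝ)/2) = 3/2 + 1 by norm_num, Real.Gamma_add_one (by norm_num),
    show (3/2:ℝ) = 1/2 + 1 by norm_num, Real.Gamma_add_one (by norm_num),
    Real.Gamma_one_half_eq]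
  ring

private lemma sg_gaussianPDFReal_std (x : ℝ) :
    gaussianPDFReal 0 1 x = (Real.sqrt (2*π))⁻¹ * Real.exp (-(1/2) * x ^ 2) := by
  unfold gaussianPDFReal
  norm_num
  left
  ring

private lemma sg_gaussianPDF_std_eq :
    gaussianPDF 0 1 = fun x => ((Real.toNNReal (gaussianPDFReal 0 1 x)) : ℝ≥0∞) := rfl

private lemma sg_integral_gauss_eq (f : ℝ → ℝ) :
    ∫ x, f x ∂(gaussianReal 0 1)
      = ∫ x, (Real.sqrt (2*π))⁻¹ * (f x * Real.exp (-(1/2) * x ^ 2)) := by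
  rw [gaussianReal_of_var_ne_zero 0 one_ne_zero, sg_gaussianPDF_std_eq,
    integral_withDensity_eq_integral_smul
      ((measurable_gaussianPDFReal 0 1).real_toNNReal) f]
  congr 1
  funext x
  rw [NNReal.smul_def, Real.coe_toNNReal _ (gaussianPDFReal_nonneg 0 1 x),
    sg_gaussianPDFReal_std, smul_eq_mul]
  ring

private lemma sg_integrable_pow_gauss (n : ℕ) :
    Integrable (fun x : ℝ => x ^ n) (gaussianReal 0 1) := by
  rw [gaussianReal_of_var_ne_zero 0 one_ne_zero, sg_gaussianPDF_std_eq,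
    integrable_withDensity_iff_integrable_smul
      ((measurable_gaussianPDFReal 0 1).real_toNNReal)]
  have h : (fun x : ℝ => (Real.toNNReal (gaussianPDFReal 0 1 x)) • (x ^ n))
      = fun x : ℝ => (Real.sqrt (2*π))⁻¹ * (x ^ n * Real.exp (-(1/2) * x ^ 2)) := by
    funext x
    rw [NNReal.smul_def, Real.coe_toNNReal _ (gaussianPDFReal_nonneg 0 1 x),
      sg_gaussianPDFReal_std, smul_eq_mul]
    ring
  rw [h]
  exact (sg_integrable_pow_mul_exp n).const_mul _

private lemma sg_sqrt2pi_pos : 0 < Real.sqrt (2*π) := Real.sqrt_pos.mpr (by positivity)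

private lemma sg_integral_pow4 : ∫ x, x ^ 4 ∂(gaussianReal 0 1) = 3 := by
  rw [sg_integral_gauss_eq (fun x => x ^ 4), integral_const_mul, sg_I4]
  field_simp

private lemma sg_integral_pow6 : ∫ x, x ^ 6 ∂(gaussianReal 0 1) = 15 := by
  rw [sg_integral_gauss_eq (fun x => x ^ 6), integral_const_mul, sg_I6]
  field_simp

private lemma sg_map_eval (d : ℕ) (i : Fin d) :
    (stdGaussian d).map (fun g => g i) = gaussianReal 0 1 := by
  have hm : Measurable (fun g : EuclideanSpace ℝ (Fin d) => g i) :=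
    (measurable_pi_apply i).comp (WithLp.measurable_ofLp 2 _)
  rw [_root_.stdGaussian, Measure.map_map hm (MeasurableEquiv.toLp 2 (Fin d → ℝ)).measurable]
  exact (measurePreserving_eval (fun _ : Fin d => gaussianReal 0 1) i).map_eq

private lemma sg_integral_eval_pow (d : ℕ) (i : Fin d) (n : ℕ) :
    ∫ g, (g i) ^ n ∂(stdGaussian d) = ∫ x, x ^ n ∂(gaussianReal 0 1) := by
  have hm : Measurable (fun g : EuclideanSpace ℝ (Fin d) => g i) :=
    (measurable_pi_apply i).comp (WithLp.measurable_ofLp 2 _)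
  rw [← sg_map_eval d i,
    integral_map hm.aemeasurable
      (Measurable.aestronglyMeasurable (by measurability))]

private lemma sg_integrable_eval_pow (d : ℕ) (i : Fin d) (n : ℕ) :
    Integrable (fun g : EuclideanSpace ℝ (Fin d) => (g i) ^ n) (stdGaussian d) := by
  have hm : Measurable (fun g : EuclideanSpace ℝ (Fin d) => g i) :=
    (measurable_pi_apply i).comp (WithLp.measurable_ofLp 2 _)
  have h := sg_integrable_pow_gauss n
  rw [← sg_map_eval d i,
    integrable_map_measure (Measurable.aestronglyMeasurable (by measurability))
      hm.aemeasurable] at h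
  exact h

private lemma sg_norm_sq (d : ℕ) (g : EuclideanSpace ℝ (Fin d)) :
    ‖g‖ ^ 2 = ∑ i, (g i) ^ 2 := by
  rw [EuclideanSpace.norm_eq, Real.sq_sqrt (by positivity)]
  simp [Real.norm_eq_abs, sq_abs]

end aux

set_option maxHeartbeats 1000000 in
/-- Expected error bound under the small-σ condition. -/
theorem expected_error_bound_small_sigma
    (d : ℕ) (hd : 1 ≤ d) (L τ : ℝ) (hL : 0 < L) (hτ : 0 < τ)
    (ε c : ℝ) (hε : 0 < ε) (hε1 : ε ≤ 1) (hc : 0 < c) (hc1 : c ≤ 1)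
    (σ : ℝ) (hσ : 0 < σ)
    (hσsmall : σ < (1 / 35) * Real.sqrt (ε * c / (τ * (d : ℝ) ^ 3 * max L 1))) :
    ∫ g, (σ ^ 4 * τ ^ 2 * ‖g‖ ^ 6 + 2 * σ ^ 2 * τ * L * ‖g‖ ^ 4) ∂(stdGaussian d) ≤ ε := by
  have hd1 : (1:ℝ) ≤ (d:ℝ) := by exact_mod_cast hd
  have hdpos : (0:ℝ) < (d:ℝ) := lt_of_lt_of_le one_pos hd1
  -- pointwise bound
  have hptw : ∀ g : EuclideanSpace ℝ (Fin d),
      σ ^ 4 * τ ^ 2 * ‖g‖ ^ 6 + 2 * σ ^ 2 * τ * L * ‖g‖ ^ 4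
        ≤ σ ^ 4 * τ ^ 2 * ((d:ℝ) ^ 2 * ∑ i, (g i) ^ 6)
          + 2 * σ ^ 2 * τ * L * ((d:ℝ) * ∑ i, (g i) ^ 4) := by
    intro g
    have hcard : (Finset.univ : Finset (Fin d)).card = d := by simp
    have h6 : ‖g‖ ^ 6 ≤ (d:ℝ) ^ 2 * ∑ i, (g i) ^ 6 := by
      have h := pow_sum_div_card_le_sum_pow
        (s := (Finset.univ : Finset (Fin d))) (f := fun i => (g i) ^ 2)
        (fun i _ => sq_nonneg _) 2
      rw [hcard, div_le_iff₀ (by positivity)] at h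
      calc ‖g‖ ^ 6 = (∑ i, (g i) ^ 2) ^ (2 + 1) := by
            rw [show (6:ℕ) = 2 * 3 by norm_num, pow_mul, sg_norm_sq]
        _ ≤ (∑ i, ((g i) ^ 2) ^ (2+1)) * (d:ℝ) ^ 2 := h
        _ = (d:ℝ) ^ 2 * ∑ i, (g i) ^ 6 := by
            rw [mul_comm]; congr 1; refine Finset.sum_congr rfl fun i _ => by ring
    have h4 : ‖g‖ ^ 4 ≤ (d:ℝ) * ∑ i, (g i) ^ 4 := by
      have h := pow_sum_div_card_le_sum_pow
        (s := (Finset.univ : Finset (Fin d))) (f := fun i => (g i) ^ 2)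
        (fun i _ => sq_nonneg _) 1
      rw [hcard, div_le_iff₀ (by positivity)] at h
      calc ‖g‖ ^ 4 = (∑ i, (g i) ^ 2) ^ (1 + 1) := by
            rw [show (4:ℕ) = 2 * 2 by norm_num, pow_mul, sg_norm_sq]
        _ ≤ (∑ i, ((g i) ^ 2) ^ (1+1)) * (d:ℝ) ^ 1 := h
        _ = (d:ℝ) * ∑ i, (g i) ^ 4 := by
            rw [mul_comm, pow_one]; congr 1; refine Finset.sum_congr rfl fun i _ => by ring
    have c1 : (0:ℝ) ≤ σ ^ 4 * τ ^ 2 := by positivity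
    have c2 : (0:ℝ) ≤ 2 * σ ^ 2 * τ * L := by positivity
    exact add_le_add (mul_le_mul_of_nonneg_left h6 c1) (mul_le_mul_of_nonneg_left h4 c2)
  -- integrability of majorant
  have hi6 : Integrable (fun g : EuclideanSpace ℝ (Fin d) => ∑ i, (g i) ^ 6) (stdGaussian d) :=
    integrable_finset_sum _ (fun i _ => sg_integrable_eval_pow d i 6)
  have hi4 : Integrable (fun g : EuclideanSpace ℝ (Fin d) => ∑ i, (g i) ^ 4) (stdGaussian d) :=
    integrable_finset_sum _ (fun i _ => sg_integrable_eval_pow d i 4)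
  have hInt : Integrable (fun g : EuclideanSpace ℝ (Fin d) =>
      σ ^ 4 * τ ^ 2 * ((d:ℝ) ^ 2 * ∑ i, (g i) ^ 6)
        + 2 * σ ^ 2 * τ * L * ((d:ℝ) * ∑ i, (g i) ^ 4)) (stdGaussian d) :=
    ((hi6.const_mul _).const_mul _).add ((hi4.const_mul _).const_mul _)
  have hmono := integral_mono_of_nonneg
    (ae_of_all _ (fun g => by positivity)) hInt (ae_of_all _ hptw)
  refine hmono.trans ?_
  -- compute the integral of the majorant
  have hs6 : ∫ g, (∑ i, (g i) ^ 6) ∂(stdGaussian d) = (d:ℝ) * 15 := by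
    rw [integral_finset_sum _ (fun i _ => sg_integrable_eval_pow d i 6)]
    simp [sg_integral_eval_pow, sg_integral_pow6, mul_comm]
  have hs4 : ∫ g, (∑ i, (g i) ^ 4) ∂(stdGaussian d) = (d:ℝ) * 3 := by
    rw [integral_finset_sum _ (fun i _ => sg_integrable_eval_pow d i 4)]
    simp [sg_integral_eval_pow, sg_integral_pow4, mul_comm]
  rw [integral_add ((hi6.const_mul _).const_mul _) ((hi4.const_mul _).const_mul _),
    integral_const_mul, integral_const_mul, integral_const_mul, integral_const_mul, hs6, hs4]
  -- final arithmetic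
  set M : ℝ := max L 1 with hM
  have hM1 : (1:ℝ) ≤ M := le_max_right _ _
  have hLM : L ≤ M := le_max_left _ _
  have hMpos : (0:ℝ) < M := lt_of_lt_of_le one_pos hM1
  have hKpos : (0:ℝ) < ε * c / (τ * (d:ℝ) ^ 3 * M) := by positivity
  have hσ2 : σ ^ 2 < (ε * c / (τ * (d:ℝ) ^ 3 * M)) / 1225 := by
    have h1 : σ ^ 2 < ((1/35) * Real.sqrt (ε * c / (τ * (d:ℝ) ^ 3 * M))) ^ 2 := by
      apply pow_lt_pow_left₀ hσsmall hσ.le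
      norm_num
    calc σ ^ 2 < ((1/35) * Real.sqrt (ε * c / (τ * (d:ℝ) ^ 3 * M))) ^ 2 := h1
      _ = (1/1225) * (Real.sqrt (ε * c / (τ * (d:ℝ) ^ 3 * M))) ^ 2 := by ring
      _ = (ε * c / (τ * (d:ℝ) ^ 3 * M)) / 1225 := by
          rw [Real.sq_sqrt hKpos.le]; ring
  have hA : σ ^ 2 * (τ * (d:ℝ) ^ 3 * M) < ε * c / 1225 := by
    have := (mul_lt_mul_of_pos_right hσ2 (show (0:ℝ) < τ * (d:ℝ) ^ 3 * M by positivity))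
    calc σ ^ 2 * (τ * (d:ℝ) ^ 3 * M)
        < (ε * c / (τ * (d:ℝ) ^ 3 * M)) / 1225 * (τ * (d:ℝ) ^ 3 * M) := this
      _ = ε * c / 1225 := by field_simp
  set A : ℝ := σ ^ 2 * (τ * (d:ℝ) ^ 3 * M) with hAdef
  have hA0 : 0 ≤ A := by positivity
  have hAε : A < ε / 1225 := lt_of_lt_of_le hA (by nlinarith)
  have hA1 : A < 1 / 1225 := lt_of_lt_of_le hAε (by nlinarith)
  have hd36 : (d:ℝ) ^ 3 ≤ (d:ℝ) ^ 6 * M ^ 2 := by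
    calc (d:ℝ) ^ 3 = (d:ℝ) ^ 3 * 1 := by ring
      _ ≤ (d:ℝ) ^ 6 * M ^ 2 :=
          mul_le_mul (pow_le_pow_right₀ hd1 (by norm_num)) (by nlinarith) zero_le_one
            (by positivity)
  have e1 : σ ^ 4 * τ ^ 2 * ((d:ℝ) ^ 2 * ((d:ℝ) * 15)) ≤ 15 * A ^ 2 := by
    have h := mul_le_mul_of_nonneg_left hd36 (show (0:ℝ) ≤ 15 * (σ ^ 4 * τ ^ 2) by positivity)
    calc σ ^ 4 * τ ^ 2 * ((d:ℝ) ^ 2 * ((d:ℝ) * 15)) = 15 * (σ ^ 4 * τ ^ 2) * (d:ℝ) ^ 3 := by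
          ring
      _ ≤ 15 * (σ ^ 4 * τ ^ 2) * ((d:ℝ) ^ 6 * M ^ 2) := h
      _ = 15 * A ^ 2 := by rw [hAdef]; ring
  have hLd : L * (d:ℝ) ^ 2 ≤ M * (d:ℝ) ^ 3 := by
    calc L * (d:ℝ) ^ 2 ≤ M * (d:ℝ) ^ 2 := mul_le_mul_of_nonneg_right hLM (by positivity)
      _ ≤ M * (d:ℝ) ^ 3 :=
          mul_le_mul_of_nonneg_left (pow_le_pow_right₀ hd1 (by norm_num)) hMpos.le
  have e2 : 2 * σ ^ 2 * τ * L * ((d:ℝ) * ((d:ℝ) * 3)) ≤ 6 * A := by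
    have h := mul_le_mul_of_nonneg_left hLd (show (0:ℝ) ≤ 6 * (σ ^ 2 * τ) by positivity)
    calc 2 * σ ^ 2 * τ * L * ((d:ℝ) * ((d:ℝ) * 3)) = 6 * (σ ^ 2 * τ) * (L * (d:ℝ) ^ 2) := by
          ring
      _ ≤ 6 * (σ ^ 2 * τ) * (M * (d:ℝ) ^ 3) := h
      _ = 6 * A := by rw [hAdef]; ring
  have hA2 : A ^ 2 < (1/1225) * (ε/1225) := by nlinarith
  nlinarith [e1, e2, hA2, hAε, hε]
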